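/- arXiv:1912.09187 — 3 statements merged into one kernel-verified Lean document; each statement's English description precedes it below -/
import Mathlib

section
/- Let (γ_n) be a sequence of strictly positive reals with lim n·γ_n = ∞, and set t_n = γ_1 + ⋯ + γ_n. Then for every C > 0, the proportion (1/n)·#{l ∈ {1,…,n} : t_n − t_l ≤ C} tends to 0 as n → ∞. -/
open Filter

/-- If `(γ_n)` are strictly positive with `n·γ_n → ∞` and
`t_n = γ_1 + ⋯ + γ_n`, then for every `C > 0` the proportion
`(1/n)·#{l ∈ {1,…,n} : t_n − t_l ≤ C}` tends to `0`. -/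
theorem card_filter_partial_sum_close_div_tendsto_zero
    (γ : ℕ → ℝ) (hγ : ∀ n, 0 < γ n)
    (hlim : Tendsto (fun n : ℕ => (n : ℝ) * γ n) atTop atTop)
    (t : ℕ → ℝ) (ht : ∀ n, t n = ∑ m ∈ Finset.Icc 1 n, γ m) :
    ∀ C > (0 : ℝ),
      Tendsto (fun n : ℕ =>
          (((Finset.Icc 1 n).filter (fun l => t n - t l ≤ C)).card : ℝ) / n)
        atTop (nhds 0) := by
  intro C hC
  rw [NormedAddCommGroup.tendsto_nhds_zero]
  intro ε hε
  set δ : ℝ := min ε 1 / 2 with hδdef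
  have hδpos : 0 < δ := half_pos (lt_min hε one_pos)
  have hδ1 : δ ≤ 1 / 2 := by
    have := min_le_right ε 1
    rw [hδdef]; linarith
  have hδε : δ ≤ ε / 2 := by
    have := min_le_left ε 1
    rw [hδdef]; linarith
  set M : ℝ := 2 * (C + 1) / δ with hMdef
  have hM : 0 < M := by positivity
  obtain ⟨N₀, hN₀⟩ := eventually_atTop.mp (hlim.eventually_ge_atTop M)
  set N : ℕ := max N₀ 1 with hNdef
  have hN1 : 1 ≤ N := le_max_right _ _
  have hN : ∀ m ≥ N, M ≤ (m : ℝ) * γ m := fun m hm => hN₀ m (le_trans (le_max_left _ _) hm)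
  have hcast : Tendsto (fun n : ℕ => (n : ℝ)) atTop atTop := tendsto_natCast_atTop_atTop
  filter_upwards [eventually_ge_atTop N, eventually_gt_atTop 0,
    hcast.eventually_ge_atTop (2 * N / δ),
    hcast.eventually_gt_atTop (2 / ε)] with n hnN hn0 hnNδ hnε
  have hn0' : (0 : ℝ) < n := Nat.cast_pos.mpr hn0
  set c : ℕ := ⌈δ * n⌉₊ with hcdef
  -- key claim: small l gives t n - t l > C
  have key : ∀ l, 1 ≤ l → l ≤ n - c → C < t n - t l := by
    intro l hl1 hlk
    have hc_le : c ≤ n := by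
      by_contra h
      push_neg at h
      have : n - c = 0 := Nat.sub_eq_zero_of_le h.le
      omega
    have hln : l ≤ n := by omega
    have hlc : l + c ≤ n := by omega
    have hceil : δ * n ≤ (c : ℝ) := Nat.le_ceil _
    have h1 : (l : ℝ) ≤ (n : ℝ) - δ * n := by
      have : (l : ℝ) + (c : ℝ) ≤ (n : ℝ) := by exact_mod_cast hlc
      linarith
    have hNδ : (N : ℝ) ≤ δ * n / 2 := by
      have : 2 * (N : ℝ) / δ ≤ n := hnNδ
      rw [div_le_iff₀ hδpos] at this
      linarith [this]
    set a : ℕ := max l (N - 1) with hadef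
    have han : a ≤ n := by
      have : N ≤ n := hnN
      omega
    have h2 : δ * n / 2 ≤ ((n - a : ℕ) : ℝ) := by
      rw [Nat.cast_sub han]
      have hmax : (a : ℝ) = max (l : ℝ) ((N - 1 : ℕ) : ℝ) := by
        rw [hadef]; push_cast; rfl
      rw [hmax]
      have hNm1 : ((N - 1 : ℕ) : ℝ) ≤ (N : ℝ) := by
        exact_mod_cast Nat.cast_le.mpr (Nat.sub_le N 1)
      have hδn : δ * n ≤ n := by nlinarith
      have hb1 : (l : ℝ) ≤ (n : ℝ) - δ * n / 2 := by linarith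
      have hb2 : ((N - 1 : ℕ) : ℝ) ≤ (n : ℝ) - δ * n / 2 := by linarith
      have := max_le hb1 hb2
      linarith
    have hsum : t n - t l = ∑ m ∈ Finset.Ioc l n, γ m := by
      rw [ht, ht]
      have e1 : Finset.Icc 1 n = Finset.Ioc 0 n := by
        rw [← Finset.Icc_add_one_left_eq_Ioc]; rfl
      have e2 : Finset.Icc 1 l = Finset.Ioc 0 l := by
        rw [← Finset.Icc_add_one_left_eq_Ioc]; rfl
      rw [e1, e2, ← Finset.sum_Ioc_consecutive γ (Nat.zero_le l) hln]
      ring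
    rw [hsum]
    have hsub2 : Finset.Ioc a n ⊆ Finset.Ioc l n :=
      Finset.Ioc_subset_Ioc_left (le_max_left _ _)
    have hstep : ∑ m ∈ Finset.Ioc a n, γ m ≤ ∑ m ∈ Finset.Ioc l n, γ m :=
      Finset.sum_le_sum_of_subset_of_nonneg hsub2 (fun i _ _ => (hγ i).le)
    have hterm : ∀ m ∈ Finset.Ioc a n, M / n ≤ γ m := by
      intro m hm
      rw [Finset.mem_Ioc] at hm
      have hmN : N ≤ m := by
        have : a < m := hm.1
        omega
      have hm0 : (0 : ℝ) < m := by
        have : 0 < m := by omega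
        exact_mod_cast this
      have hMm := hN m hmN
      have ha1 : M / m ≤ γ m := by
        rw [div_le_iff₀ hm0]
        linarith [mul_comm (m : ℝ) (γ m)]
      have ha2 : M / n ≤ M / m := by
        apply div_le_div_of_nonneg_left hM.le hm0
        exact_mod_cast hm.2
      linarith
    have hcard : (Finset.Ioc a n).card = n - a := Nat.card_Ioc a n
    have hlow : ((n - a : ℕ) : ℝ) * (M / n) ≤ ∑ m ∈ Finset.Ioc a n, γ m := by
      have := Finset.card_nsmul_le_sum (Finset.Ioc a n) γ (M / n) hterm
      rwa [hcard, nsmul_eq_mul] at this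
    have hMn : (0 : ℝ) ≤ M / n := by positivity
    have hmul : δ * n / 2 * (M / n) ≤ ((n - a : ℕ) : ℝ) * (M / n) :=
      mul_le_mul_of_nonneg_right h2 hMn
    have heq : δ * n / 2 * (M / n) = C + 1 := by
      rw [hMdef]
      field_simp
    linarith
  -- subset
  have hsub : (Finset.Icc 1 n).filter (fun l => t n - t l ≤ C) ⊆ Finset.Ioc (n - c) n := by
    intro l hl
    simp only [Finset.mem_filter, Finset.mem_Icc] at hl
    rw [Finset.mem_Ioc]
    refine ⟨?_, hl.1.2⟩
    by_contra h
    push_neg at h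
    exact absurd hl.2 (not_le.mpr (key l hl.1.1 h))
  have hcard_le :
      ((((Finset.Icc 1 n).filter (fun l => t n - t l ≤ C)).card : ℝ)) ≤ δ * n + 1 := by
    have h1 := Finset.card_le_card hsub
    have h2 : (Finset.Ioc (n - c) n).card = n - (n - c) := Nat.card_Ioc _ _
    have h3 : ((Finset.Icc 1 n).filter (fun l => t n - t l ≤ C)).card ≤ c := by omega
    have h4 : (c : ℝ) ≤ δ * n + 1 := (Nat.ceil_lt_add_one (by positivity)).le
    calc ((((Finset.Icc 1 n).filter (fun l => t n - t l ≤ C)).card : ℝ))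
        ≤ (c : ℝ) := by exact_mod_cast h3
      _ ≤ δ * n + 1 := h4
  rw [Real.norm_eq_abs, abs_of_nonneg (by positivity), div_lt_iff₀ hn0']
  have hεn : 2 < ε * n := by
    have : 2 / ε < (n : ℝ) := hnε
    rw [div_lt_iff₀ hε] at this
    linarith [this]
  nlinarith [hcard_le, hδε, hεn, hn0']
end

section
/- Let (A_m)_{m∈ℕ} ⊂ 𝓕 and suppose that for each m the sequence (Y_n) of ℝᵈ-valued random variables converges stably on A_m to a kernel K_m. Then there exists a probability kernel K from A := ⋃_m A_m to ℝᵈ agreeing almost surely with K_m on each A_m, and Y_n converges stably to K on A. -/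
open MeasureTheory Filter ProbabilityTheory

/-- `(Y_n)` converges stably on `A` to the probability kernel `K`. -/
def StablyConvergesOn {Ω : Type*} [MeasurableSpace Ω] {E : Type*}
    [MeasurableSpace E] [TopologicalSpace E]
    (P : Measure Ω) (Y : ℕ → Ω → E) (A : Set Ω) (K : Kernel Ω E) : Prop :=
  ∀ B : Set Ω, MeasurableSet B → ∀ f : E → ℝ, Continuous f → (∃ C, ∀ x, |f x| ≤ C) →
    Tendsto (fun n => ∫ ω in A ∩ B, f (Y n ω) ∂P) atTop
      (nhds (∫ ω in A ∩ B, ∫ y, f y ∂(K ω) ∂P))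

open Set
open scoped NNReal ENNReal BoundedContinuousFunction

section Aux

variable {Ω : Type*} [MeasurableSpace Ω] {d : ℕ}

local notation "E" => EuclideanSpace ℝ (Fin d)

/-- strongly measurable integral of a bounded continuous function against a kernel -/
lemma sm_int_kernel (L : Kernel Ω E) [IsSFiniteKernel L] {f : E → ℝ} (hf : Continuous f) :
    StronglyMeasurable fun ω => ∫ y, f y ∂L ω :=
  MeasureTheory.StronglyMeasurable.integral_kernel_prod_right
    (f := fun (_ : Ω) y => f y) (hf.stronglyMeasurable.comp_measurable measurable_snd)

lemma int_kernel_bound (L : Kernel Ω E) [IsMarkovKernel L] {f : E → ℝ} (hf : Continuous f)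
    {C : ℝ} (hC : ∀ x, |f x| ≤ C) (ω : Ω) : |∫ y, f y ∂L ω| ≤ C := by
  rw [← Real.norm_eq_abs]
  calc ‖∫ y, f y ∂L ω‖ ≤ C * ((L ω) Set.univ).toReal :=
        norm_integral_le_of_norm_le_const (Eventually.of_forall fun y => by
          rw [Real.norm_eq_abs]; exact hC y)
  _ = C := by simp

/-- On overlaps the kernels agree a.e. -/
lemma overlap_ae {P : Measure Ω} [IsProbabilityMeasure P]
    (Y : ℕ → Ω → E) (A : ℕ → Set Ω) (hA : ∀ m, MeasurableSet (A m))
    (K : ℕ → Kernel Ω E) [∀ m, IsMarkovKernel (K m)]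
    (h : ∀ m, StablyConvergesOn P Y (A m) (K m)) (j m : ℕ) :
    ∀ᵐ ω ∂(P.restrict (A j ∩ A m)), K j ω = K m ω := by
  classical
  set O : Set Ω := A j ∩ A m with hO
  have hOm : MeasurableSet O := (hA j).inter (hA m)
  set μ : Measure Ω := P.restrict O with hμ
  -- Step A : set integrals of the kernel integrals agree
  have stepA : ∀ S : Set Ω, MeasurableSet S → ∀ f : E → ℝ, Continuous f →
      (∃ C, ∀ x, |f x| ≤ C) →
      ∫ ω in O ∩ S, (∫ y, f y ∂(K j ω)) ∂P = ∫ ω in O ∩ S, (∫ y, f y ∂(K m ω)) ∂P := by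
    intro S hS f hf hfb
    have h1 := h j (A m ∩ S) ((hA m).inter hS) f hf hfb
    have h2 := h m (A j ∩ S) ((hA j).inter hS) f hf hfb
    have e1 : A j ∩ (A m ∩ S) = O ∩ S := by rw [hO, Set.inter_assoc]
    have e2 : A m ∩ (A j ∩ S) = O ∩ S := by
      rw [hO]; rw [← Set.inter_assoc, Set.inter_comm (A m) (A j), Set.inter_assoc]
    rw [e1] at h1; rw [e2] at h2
    exact tendsto_nhds_unique h1 h2
  -- Step B : the comp-prod measures agree
  have hcp : μ ⊗ₘ (K j) = μ ⊗ₘ (K m) := by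
    refine MeasureTheory.ext_of_generate_finite
      (Set.image2 (· ×ˢ ·) {s | MeasurableSet s} {t | MeasurableSet t})
      generateFrom_prod.symm isPiSystem_prod ?_ ?_
    · rintro _ ⟨S, hS, T, hT, rfl⟩
      simp only [Set.mem_setOf_eq] at hS hT
      rw [Measure.compProd_apply_prod hS hT, Measure.compProd_apply_prod hS hT]
      -- compare as measures in T via bind
      set νj : Measure E := (μ.restrict S).bind (K j) with hνj
      set νm : Measure E := (μ.restrict S).bind (K m) with hνm
      have hbj : ∀ (KK : ℕ → Kernel Ω E) (i : ℕ) {t : Set E} (ht : MeasurableSet t),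
          ((μ.restrict S).bind (KK i)) t = ∫⁻ ω in S, (KK i ω) t ∂μ := fun KK i t ht =>
        Measure.bind_apply ht (KK i).measurable.aemeasurable
      rw [← hbj K j hT, ← hbj K m hT]
      congr 1
      haveI : IsFiniteMeasure νj := ⟨by
        rw [hνj, Measure.bind_apply MeasurableSet.univ (K j).measurable.aemeasurable]
        simp [measure_lt_top]⟩
      haveI : IsFiniteMeasure νm := ⟨by
        rw [hνm, Measure.bind_apply MeasurableSet.univ (K m).measurable.aemeasurable]
        simp [measure_lt_top]⟩
      refine MeasureTheory.ext_of_forall_lintegral_eq_of_IsFiniteMeasure (fun f => ?_)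
      -- pass to Bochner integrals
      set c : ℝ := ((nndist f 0 : ℝ≥0) : ℝ) with hc
      have hfb : ∀ x : EuclideanSpace ℝ (Fin d), |((f x : ℝ≥0) : ℝ)| ≤ c := fun x => by
        rw [abs_of_nonneg (f x).coe_nonneg]
        exact_mod_cast BoundedContinuousFunction.NNReal.upper_bound f x
      have hfc : Continuous fun x : EuclideanSpace ℝ (Fin d) => ((f x : ℝ≥0) : ℝ) :=
        NNReal.continuous_coe.comp f.continuous
      have key : ∀ i : ℕ, ∫⁻ x, (f x : ℝ≥0∞) ∂((μ.restrict S).bind (K i))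
          = ENNReal.ofReal (∫ ω in O ∩ S, (∫ y, ((f y : ℝ≥0) : ℝ) ∂(K i ω)) ∂P) := by
        intro i
        have hmeas : Measurable fun x : EuclideanSpace ℝ (Fin d) => (f x : ℝ≥0∞) :=
          measurable_coe_nnreal_ennreal.comp f.continuous.measurable
        rw [show ∫⁻ x, (f x : ℝ≥0∞) ∂((μ.restrict S).bind (K i))
            = ∫⁻ ω, (∫⁻ x, (f x : ℝ≥0∞) ∂(K i ω)) ∂(μ.restrict S) from
          MeasureTheory.Measure.lintegral_bind (K i).measurable.aemeasurable hmeas.aemeasurable]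
        have inner : ∀ ω, ∫⁻ x, (f x : ℝ≥0∞) ∂(K i ω)
            = ENNReal.ofReal (∫ y, ((f y : ℝ≥0) : ℝ) ∂(K i ω)) := by
          intro ω
          rw [MeasureTheory.ofReal_integral_eq_lintegral_ofReal]
          · congr 1; ext x; rw [ENNReal.ofReal_coe_nnreal]
          · exact Integrable.mono' (integrable_const c)
              hfc.aestronglyMeasurable
              (Eventually.of_forall fun x => by rw [Real.norm_eq_abs]; exact hfb x)
          · exact Eventually.of_forall fun x => (f x).coe_nonneg
        simp_rw [inner]
        rw [← MeasureTheory.ofReal_integral_eq_lintegral_ofReal]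
        · congr 1
          rw [hμ, Measure.restrict_restrict hS, Set.inter_comm S O]
        · refine Integrable.mono' (integrable_const c)
            (sm_int_kernel (K i) hfc).aestronglyMeasurable
            (Eventually.of_forall fun ω => ?_)
          rw [Real.norm_eq_abs]
          exact int_kernel_bound (K i) hfc hfb ω
        · exact Eventually.of_forall fun ω =>
            integral_nonneg fun y => (f y).coe_nonneg
      rw [key j, key m, stepA S hS _ hfc ⟨c, hfb⟩]
    · simp [Measure.compProd_apply_univ]
  -- Step C : uniqueness of disintegration
  have hfst : (μ ⊗ₘ (K j)).fst = μ := Measure.fst_compProd μ (K j)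
  have h1 : ∀ᵐ ω ∂μ, K j ω = (μ ⊗ₘ (K j)).condKernel ω := by
    have := ProbabilityTheory.eq_condKernel_of_measure_eq_compProd (ρ := μ ⊗ₘ (K j)) (K j)
      (by rw [hfst])
    rwa [hfst] at this
  have h2 : ∀ᵐ ω ∂μ, K m ω = (μ ⊗ₘ (K j)).condKernel ω := by
    have := ProbabilityTheory.eq_condKernel_of_measure_eq_compProd (ρ := μ ⊗ₘ (K j)) (K m)
      (by rw [hfst, hcp])
    rwa [hfst] at this
  filter_upwards [h1, h2] with ω e1 e2
  rw [e1, e2]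

lemma stable_on_union {P : Measure Ω} [IsProbabilityMeasure P]
    (Y : ℕ → Ω → E) (hY : ∀ n, Measurable (Y n))
    (A : ℕ → Set Ω) (hA : ∀ m, MeasurableSet (A m))
    (K : ℕ → Kernel Ω E) [∀ m, IsMarkovKernel (K m)]
    (h : ∀ m, StablyConvergesOn P Y (A m) (K m))
    (L : Kernel Ω E) (hL : IsMarkovKernel L)
    (hae : ∀ m, ∀ᵐ ω ∂(P.restrict (A m)), L ω = K m ω) :
    StablyConvergesOn P Y (⋃ m, A m) L := by
  intro B hB f hf hfb
  obtain ⟨C, hC⟩ := hfb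
  have hC0 : 0 ≤ C := le_trans (abs_nonneg _) (hC 0)
  set T : Set Ω := ⋃ m, A m with hT
  have hTm : MeasurableSet T := MeasurableSet.iUnion hA
  set g : Ω → ℝ := fun ω => ∫ y, f y ∂L ω with hg
  have sm_g : StronglyMeasurable g := sm_int_kernel L hf
  have g_bd : ∀ ω, |g ω| ≤ C := fun ω => int_kernel_bound L hf hC ω
  -- integrability
  have int_fY : ∀ n, Integrable (fun ω => f (Y n ω)) P := fun n =>
    Integrable.mono' (integrable_const C) (hf.measurable.comp (hY n)).aestronglyMeasurable
      (Eventually.of_forall fun ω => by rw [Real.norm_eq_abs]; exact hC _)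
  have int_g : Integrable g P :=
    Integrable.mono' (integrable_const C) sm_g.aestronglyMeasurable
      (Eventually.of_forall fun ω => by rw [Real.norm_eq_abs]; exact g_bd _)
  -- per-m limit with arbitrary B'
  have perm : ∀ m, ∀ B' : Set Ω, MeasurableSet B' →
      Tendsto (fun n => ∫ ω in A m ∩ B', f (Y n ω) ∂P) atTop
        (nhds (∫ ω in A m ∩ B', g ω ∂P)) := by
    intro m B' hB'
    have h1 := h m B' hB' f hf ⟨C, hC⟩
    have he : ∫ ω in A m ∩ B', (∫ y, f y ∂(K m ω)) ∂P = ∫ ω in A m ∩ B', g ω ∂P := by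
      refine integral_congr_ae ?_
      have := ae_restrict_of_ae_restrict_of_subset
        (Set.inter_subset_left : A m ∩ B' ⊆ A m) (hae m)
      filter_upwards [this] with ω hω
      rw [hg]; simp only; rw [hω]
    rwa [he] at h1
  -- partial unions
  set U : ℕ → Set Ω := fun M => ⋃ j ∈ Finset.range (M + 1), A j with hU
  have hUm : ∀ M, MeasurableSet (U M) := fun M =>
    MeasurableSet.biUnion (Set.to_countable _) (fun j _ => hA j)
  have hU0 : U 0 = A 0 := by simp [hU]
  have hUsucc : ∀ M, U (M + 1) = A (M + 1) ∪ U M := by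
    intro M
    rw [hU]
    simp only
    rw [Finset.range_add_one, Finset.set_biUnion_insert]
  have hUT : ∀ M, U M ⊆ T := fun M =>
    Set.iUnion₂_subset fun j _ => Set.subset_iUnion A j
  have hUmono : Monotone U := fun a b hab =>
    Set.biUnion_subset_biUnion_left (Finset.range_subset_range.mpr (by omega))
  have hUnion : (⋃ M, U M) = T := by
    refine Set.Subset.antisymm (Set.iUnion_subset hUT) (Set.iUnion_subset fun m => ?_)
    exact (Set.subset_iUnion₂ (s := fun j _ => A j) m
      (Finset.mem_range.mpr (by omega))).trans (Set.subset_iUnion U m)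
  -- claim (1): convergence on partial unions
  have claim1 : ∀ M, Tendsto (fun n => ∫ ω in U M ∩ B, f (Y n ω) ∂P) atTop
      (nhds (∫ ω in U M ∩ B, g ω ∂P)) := by
    intro M
    induction M with
    | zero =>
      rw [hU0]; exact perm 0 B hB
    | succ M ih =>
      have edec : U (M + 1) ∩ B = (U M ∩ B) ∪ (A (M + 1) ∩ (B \ U M)) := by
        rw [hUsucc]
        ext x
        simp only [Set.mem_inter_iff, Set.mem_union, Set.mem_diff]
        tauto
      have hdisj : Disjoint (U M ∩ B) (A (M + 1) ∩ (B \ U M)) := by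
        refine Set.disjoint_left.mpr ?_
        rintro x ⟨hx1, _⟩ ⟨_, _, hx3⟩
        exact hx3 hx1
      have hm2 : MeasurableSet (A (M + 1) ∩ (B \ U M)) :=
        (hA _).inter (hB.diff (hUm M))
      have splitInt : ∀ (φ : Ω → ℝ), Integrable φ P →
          ∫ ω in U (M + 1) ∩ B, φ ω ∂P
            = ∫ ω in U M ∩ B, φ ω ∂P + ∫ ω in A (M + 1) ∩ (B \ U M), φ ω ∂P := by
        intro φ hφ
        rw [edec]
        exact setIntegral_union hdisj hm2 hφ.integrableOn hφ.integrableOn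
      have := (ih.add (perm (M + 1) (B \ U M) (hB.diff (hUm M))))
      convert this using 2 with n
      · exact splitInt _ (int_fY n)
      · exact splitInt _ int_g
  -- claim (2): tail measure goes to 0
  have tail0 : Tendsto (fun M => (P (T \ U M)).toReal) atTop (nhds 0) := by
    have hmono : Antitone (fun M => T \ U M) := fun a b hab =>
      Set.diff_subset_diff_right (hUmono hab)
    have hinter : ⋂ M, (T \ U M) = ∅ := by
      rw [← Set.diff_iUnion, hUnion]
      simp
    have := tendsto_measure_iInter_atTop (μ := P)
      (fun M => (hTm.diff (hUm M)).nullMeasurableSet) hmono ⟨0, measure_ne_top P _⟩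
    rw [hinter] at this
    simp only [measure_empty] at this
    exact (ENNReal.tendsto_toReal ENNReal.zero_ne_top).comp this
  -- final ε argument
  rw [Metric.tendsto_atTop]
  intro ε hε
  have hquarter : Tendsto (fun M => C * (P (T \ U M)).toReal) atTop (nhds 0) := by
    simpa using tail0.const_mul C
  have : ∀ᶠ M in atTop, C * (P (T \ U M)).toReal < ε / 4 :=
    (hquarter.eventually (eventually_lt_nhds (by linarith : (0:ℝ) < ε / 4)))
  obtain ⟨M, hM⟩ := this.exists
  have hclose := (Metric.tendsto_atTop.mp (claim1 M)) (ε / 4) (by linarith)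
  obtain ⟨N, hN⟩ := hclose
  refine ⟨N, fun n hn => ?_⟩
  -- bound the difference of set integrals over T∩B and U M∩B
  have keybound : ∀ (φ : Ω → ℝ), Integrable φ P → (∀ ω, |φ ω| ≤ C) →
      |∫ ω in T ∩ B, φ ω ∂P - ∫ ω in U M ∩ B, φ ω ∂P| ≤ C * (P (T \ U M)).toReal := by
    intro φ hφ hφC
    have hsub : U M ∩ B ⊆ T ∩ B := Set.inter_subset_inter_left B (hUT M)
    rw [← integral_diff ((hUm M).inter hB) hφ.integrableOn hsub]
    have hD : (T ∩ B) \ (U M ∩ B) ⊆ T \ U M := by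
      rintro x ⟨⟨hx1, hx2⟩, hx3⟩
      exact ⟨hx1, fun hc => hx3 ⟨hc, hx2⟩⟩
    calc |∫ ω in (T ∩ B) \ (U M ∩ B), φ ω ∂P|
        ≤ C * (P ((T ∩ B) \ (U M ∩ B))).toReal := by
          rw [← Real.norm_eq_abs]
          exact norm_setIntegral_le_of_norm_le_const (C := C)
            (lt_of_le_of_lt (measure_mono (Set.subset_univ _)) (measure_lt_top P _))
            (fun x _ => by rw [Real.norm_eq_abs]; exact hφC x)
      _ ≤ C * (P (T \ U M)).toReal := by
          refine mul_le_mul_of_nonneg_left ?_ hC0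
          exact ENNReal.toReal_mono (measure_ne_top P _) (measure_mono hD)
  have b1 := keybound (fun ω => f (Y n ω)) (int_fY n) (fun ω => hC _)
  have b2 := keybound g int_g g_bd
  have b3 := hN n hn
  rw [Real.dist_eq] at b3 ⊢
  have tri1 := abs_sub_le (∫ ω in T ∩ B, f (Y n ω) ∂P)
    (∫ ω in U M ∩ B, f (Y n ω) ∂P) (∫ ω in T ∩ B, g ω ∂P)
  have tri2 := abs_sub_le (∫ ω in U M ∩ B, f (Y n ω) ∂P)
    (∫ ω in U M ∩ B, g ω ∂P) (∫ ω in T ∩ B, g ω ∂P)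
  have habs : |∫ ω in U M ∩ B, g ω ∂P - ∫ ω in T ∩ B, g ω ∂P|
      = |∫ ω in T ∩ B, g ω ∂P - ∫ ω in U M ∩ B, g ω ∂P| := abs_sub_comm _ _
  rw [habs] at tri2
  linarith [b1, b2, b3, tri1, tri2]


end Aux

/-- If `(Y_n)` converges stably on each `A_m` to a kernel `K_m`, then there
is a probability kernel `K` agreeing a.s. with `K_m` on each `A_m` such that `(Y_n)`
converges stably to `K` on `A = ⋃_m A_m`; moreover every such kernel is a stable limit
of `(Y_n)` on `A`. -/
theorem stable_convergence_on_countable_union {Ω : Type*} [MeasurableSpace Ω]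
    (P : Measure Ω) [IsProbabilityMeasure P] {d : ℕ}
    (Y : ℕ → Ω → EuclideanSpace ℝ (Fin d)) (hY : ∀ n, Measurable (Y n))
    (A : ℕ → Set Ω) (hA : ∀ m, MeasurableSet (A m))
    (K : ℕ → Kernel Ω (EuclideanSpace ℝ (Fin d))) [∀ m, IsMarkovKernel (K m)]
    (h : ∀ m, StablyConvergesOn P Y (A m) (K m)) :
    (∃ L : Kernel Ω (EuclideanSpace ℝ (Fin d)), IsMarkovKernel L ∧
        (∀ m, ∀ᵐ ω ∂(P.restrict (A m)), L ω = K m ω) ∧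
        StablyConvergesOn P Y (⋃ m, A m) L) ∧
      (∀ L : Kernel Ω (EuclideanSpace ℝ (Fin d)), IsMarkovKernel L →
        (∀ m, ∀ᵐ ω ∂(P.restrict (A m)), L ω = K m ω) →
        StablyConvergesOn P Y (⋃ m, A m) L) := by

  classical
  have main : ∀ L : Kernel Ω (EuclideanSpace ℝ (Fin d)), IsMarkovKernel L →
      (∀ m, ∀ᵐ ω ∂(P.restrict (A m)), L ω = K m ω) →
      StablyConvergesOn P Y (⋃ m, A m) L :=
    fun L hL hae => stable_on_union Y hY A hA K h L hL hae
  refine ⟨?_, main⟩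
  -- construct the kernel
  have hex : ∀ ω : Ω, ∃ m, ω ∈ A m ∪ (⋃ j, A j)ᶜ := by
    intro ω
    by_cases hω : ω ∈ ⋃ j, A j
    · obtain ⟨j, hj⟩ := Set.mem_iUnion.mp hω
      exact ⟨j, Or.inl hj⟩
    · exact ⟨0, Or.inr hω⟩
  have hmeasL : Measurable (fun ω => K (Nat.find (hex ω)) ω) := by
    have hm := Measurable.find (f := fun n (ω : Ω) => K n ω)
      (p := fun n ω => ω ∈ A n ∪ (⋃ j, A j)ᶜ)
      (fun n => (K n).measurable)
      (fun n => (hA n).union (MeasurableSet.iUnion hA).compl) hex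
    convert hm using 2
  set L : Kernel Ω (EuclideanSpace ℝ (Fin d)) :=
    ⟨fun ω => K (Nat.find (hex ω)) ω, hmeasL⟩ with hLdef
  have hLapp : ∀ ω, L ω = K (Nat.find (hex ω)) ω := fun ω => rfl
  haveI hLmk : IsMarkovKernel L := by
    refine ⟨fun ω => ?_⟩
    rw [hLapp]
    infer_instance
  have hae : ∀ m, ∀ᵐ ω ∂(P.restrict (A m)), L ω = K m ω := by
    intro m
    have hover : ∀ j, ∀ᵐ ω ∂(P.restrict (A m)), ω ∈ A j → K j ω = K m ω := by
      intro j
      have h1 := overlap_ae Y A hA K h j m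
      rw [← Measure.restrict_restrict (hA j)] at h1
      exact ae_imp_of_ae_restrict h1
    have hall : ∀ᵐ ω ∂(P.restrict (A m)), ∀ j, ω ∈ A j → K j ω = K m ω :=
      (ae_all_iff).mpr hover
    filter_upwards [hall, ae_restrict_mem (hA m)] with ω hω hmem
    rw [hLapp]
    have hfind := Nat.find_spec (hex ω)
    rcases hfind with hfound | hout
    · exact hω _ hfound
    · exact absurd (Set.mem_iUnion.mpr ⟨m, hmem⟩) hout
  exact ⟨L, hLmk, hae, main L hLmk hae⟩
end

section
/- Let (X_n) be ℝ^{d′}-valued random variables converging in probability on A ∈ 𝓕 to a random variable X_∞, and let (Y_n) be ℝᵈ-valued random variables converging stably on A to a kernel K. Then the pair (X_n, Y_n) converges stably on A to the kernel K̄(ω, d(x,y)) = δ_{X_∞(ω)}(dx) ⊗ K(ω, dy). -/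
open MeasureTheory Filter ProbabilityTheory

open Topology

section Auxiliary


lemma integrable_of_abs_le {α : Type*} [MeasurableSpace α] {μ : Measure α} [IsFiniteMeasure μ]
    {φ : α → ℝ} (hm : AEStronglyMeasurable φ μ) {C : ℝ} (hb : ∀ x, |φ x| ≤ C) :
    Integrable φ μ :=
  Integrable.mono' (integrable_const C) hm (ae_of_all _ fun x => by
    simpa [Real.norm_eq_abs] using hb x)

lemma abs_integral_le_of_abs_le {E : Type*} [MeasurableSpace E] (μ : Measure E)
    [IsProbabilityMeasure μ] {φ : E → ℝ} {C : ℝ} (h : ∀ y, |φ y| ≤ C) : |∫ y, φ y ∂μ| ≤ C := by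
  have := norm_integral_le_of_norm_le_const (μ := μ) (C := C) (f := φ)
    (ae_of_all _ fun y => by simpa [Real.norm_eq_abs] using h y)
  simpa [Real.norm_eq_abs] using this

lemma lip_fst_bound {E' E : Type*} [PseudoMetricSpace E'] [PseudoMetricSpace E] {g : E' × E → ℝ}
    {L : NNReal} (hg : LipschitzWith L g) {C : ℝ} (hgC : ∀ z, |g z| ≤ C) (x x' : E') (y : E) :
    |g (x, y) - g (x', y)| ≤ min (2*C) (L * dist x x') := by
  refine le_min ?_ ?_
  · calc |g (x,y) - g (x',y)| ≤ |g (x,y)| + |g (x',y)| := abs_sub _ _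
    _ ≤ 2*C := by have := hgC (x,y); have := hgC (x',y); linarith
  · have := hg.dist_le_mul (x, y) (x', y)
    rwa [Real.dist_eq, Prod.dist_eq, dist_self, max_eq_left dist_nonneg] at this

lemma fiber_sum {Ω E' : Type*} [MeasurableSpace Ω] [MeasurableSpace E'] (μ : Measure Ω)
    (s : SimpleFunc Ω E') (c : E' → Ω → ℝ) (hc : ∀ x, Integrable (c x) μ) :
    ∫ ω, c (s ω) ω ∂μ = ∑ x ∈ s.range, ∫ ω in s ⁻¹' {x}, c x ω ∂μ := by
  have hpt : ∀ ω, c (s ω) ω = ∑ x ∈ s.range, Set.indicator (s ⁻¹' {x}) (c x) ω := by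
    intro ω
    rw [Finset.sum_eq_single (s ω)]
    · simp [Set.indicator_of_mem, Set.mem_preimage]
    · intro b _ hb
      exact Set.indicator_of_notMem (fun h => hb (Set.mem_singleton_iff.mp (Set.mem_preimage.mp h)).symm) _
    · intro h; exact absurd (SimpleFunc.mem_range_self s ω) h
  calc ∫ ω, c (s ω) ω ∂μ
      = ∫ ω, ∑ x ∈ s.range, Set.indicator (s ⁻¹' {x}) (c x) ω ∂μ := by
        exact integral_congr_ae (ae_of_all _ hpt)
    _ = ∑ x ∈ s.range, ∫ ω, Set.indicator (s ⁻¹' {x}) (c x) ω ∂μ := by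
        refine integral_finset_sum _ fun x _ => ((hc x).indicator (s.measurableSet_fiber x))
    _ = ∑ x ∈ s.range, ∫ ω in s ⁻¹' {x}, c x ω ∂μ := by
        exact Finset.sum_congr rfl fun x _ => integral_indicator (s.measurableSet_fiber x)


lemma moreau_approx {Z : Type*} [PseudoMetricSpace Z] [Nonempty Z] {f : Z → ℝ} (hf : Continuous f) {C : ℝ}
    (hC : ∀ z, |f z| ≤ C) :
    ∃ g : ℕ → Z → ℝ, (∀ m : ℕ, LipschitzWith m (g m)) ∧ (∀ m z, |g m z| ≤ C) ∧
      (∀ m z, g m z ≤ f z) ∧ ∀ z, Tendsto (fun m => g m z) atTop (𝓝 (f z)) := by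
  set g : ℕ → Z → ℝ := fun m z => ⨅ w, (f w + m * dist z w) with hg
  have hbdd : ∀ (m : ℕ) (z : Z), BddBelow (Set.range fun w => f w + m * dist z w) := by
    intro m z
    refine ⟨-C, ?_⟩
    rintro _ ⟨w, rfl⟩
    show -C ≤ f w + ↑m * dist z w
    have h1 := (abs_le.mp (hC w)).1
    have h2 : (0:ℝ) ≤ m * dist z w := by positivity
    linarith
  have hle : ∀ m z, g m z ≤ f z := by
    intro m z
    have := ciInf_le (hbdd m z) z
    simpa [hg] using this
  have hgeC : ∀ m z, -C ≤ g m z := by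
    intro m z
    refine le_ciInf fun w => ?_
    have h1 := (abs_le.mp (hC w)).1
    have h2 : (0:ℝ) ≤ m * dist z w := by positivity
    linarith
  refine ⟨g, ?_, ?_, hle, ?_⟩
  · -- Lipschitz
    intro m
    refine LipschitzWith.of_dist_le_mul fun z z' => ?_
    rw [Real.dist_eq, abs_sub_le_iff]
    have key : ∀ a b : Z, g m a - (m : ℝ) * dist a b ≤ g m b := by
      intro a b
      refine le_ciInf fun w => ?_
      have h3 : (g m a : ℝ) ≤ f w + m * dist a w := ciInf_le (hbdd m a) w
      have h4 : dist a w ≤ dist a b + dist b w := dist_triangle a b w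
      have h5 : (0:ℝ) ≤ (m:ℝ) := by positivity
      have h6 : (m:ℝ) * dist a w ≤ m * dist a b + m * dist b w := by nlinarith
      linarith
    constructor
    · have := key z z'; push_cast; linarith
    · have := key z' z; rw [dist_comm z' z] at this; push_cast; linarith
  · -- bound
    intro m z
    refine abs_le.mpr ⟨hgeC m z, (hle m z).trans (abs_le.mp (hC z)).2⟩
  · -- tendsto
    intro z
    rw [Metric.tendsto_atTop]
    intro ε hε
    obtain ⟨δ, hδ, hδ'⟩ := Metric.continuousAt_iff.mp (hf.continuousAt (x := z)) (ε/2) (by positivity)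
    obtain ⟨N, hN⟩ := exists_nat_ge ((2*C)/δ)
    refine ⟨N, fun m hm => ?_⟩
    have hge : f z - ε/2 ≤ g m z := by
      refine le_ciInf fun w => ?_
      by_cases hw : dist z w < δ
      · have := hδ' (x := w) (by rwa [dist_comm] at hw)
        rw [Real.dist_eq] at this
        have h1 := (abs_lt.mp this).1
        have h2 : (0:ℝ) ≤ m * dist z w := by positivity
        linarith
      · push_neg at hw
        have h1 := (abs_le.mp (hC w)).1
        have h2 := (abs_le.mp (hC z)).2
        have hNm : (N : ℝ) ≤ m := by exact_mod_cast hm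
        have h3 : (2*C)/δ * δ ≤ (m:ℝ) * dist z w := by
          apply mul_le_mul (hN.trans hNm) hw (le_of_lt hδ)
          positivity
        rw [div_mul_cancel₀ _ (ne_of_gt hδ)] at h3
        linarith
    have hle' := hle m z
    rw [Real.dist_eq, abs_lt]
    constructor <;> linarith

end Auxiliary

lemma lip_case {Ω : Type*} [MeasurableSpace Ω]
    (P : Measure Ω) [IsProbabilityMeasure P] {d d' : ℕ}
    (A B : Set Ω) (hA : MeasurableSet A) (hB : MeasurableSet B)
    (X : ℕ → Ω → EuclideanSpace ℝ (Fin d')) (Xinf : Ω → EuclideanSpace ℝ (Fin d'))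
    (hXinf : Measurable Xinf) (hX : ∀ n, Measurable (X n))
    (hXp : ∀ ε > (0 : ℝ),
      Tendsto (fun n => P ({ω | ε < dist (X n ω) (Xinf ω)} ∩ A)) atTop (nhds 0))
    (Y : ℕ → Ω → EuclideanSpace ℝ (Fin d)) (hY : ∀ n, Measurable (Y n))
    (K : Kernel Ω (EuclideanSpace ℝ (Fin d))) [IsMarkovKernel K]
    (h : StablyConvergesOn P Y A K)
    (g : EuclideanSpace ℝ (Fin d') × EuclideanSpace ℝ (Fin d) → ℝ) (L : NNReal)
    (hg : LipschitzWith L g) (C : ℝ) (hC0 : 0 ≤ C) (hgC : ∀ z, |g z| ≤ C) :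
    Tendsto (fun n => ∫ ω in A ∩ B, g (X n ω, Y n ω) ∂P) atTop
      (𝓝 (∫ ω in A ∩ B, ∫ y, g (Xinf ω, y) ∂(K ω) ∂P)) := by
  have hgc : Continuous g := hg.continuous
  set μ := P.restrict (A ∩ B) with hμ
  -- simple function approximations of Xinf
  set s : ℕ → SimpleFunc Ω (EuclideanSpace ℝ (Fin d')) :=
    fun m => SimpleFunc.approxOn Xinf hXinf Set.univ 0 (Set.mem_univ 0) m with hs
  have hsT : ∀ ω, Tendsto (fun m => s m ω) atTop (𝓝 (Xinf ω)) :=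
    fun ω => SimpleFunc.tendsto_approxOn hXinf _ (by simp)
  -- abbreviations
  set I : ℕ → ℝ := fun n => ∫ ω, g (X n ω, Y n ω) ∂μ with hI
  set J : ℕ → ℝ := fun n => ∫ ω, g (Xinf ω, Y n ω) ∂μ with hJ
  set Jm : ℕ → ℕ → ℝ := fun m n => ∫ ω, g (s m ω, Y n ω) ∂μ with hJm
  set Tm : ℕ → ℝ := fun m => ∫ ω, (∫ y, g (s m ω, y) ∂(K ω)) ∂μ with hTm
  set T : ℝ := ∫ ω, (∫ y, g (Xinf ω, y) ∂(K ω)) ∂μ with hT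
  set e : ℕ → ℝ := fun m => ∫ ω, min (2*C) (L * dist (Xinf ω) (s m ω)) ∂μ with he
  show Tendsto I atTop (𝓝 T)
  -- measurability of kernel integrals
  have hkim : ∀ (ξ : Ω → EuclideanSpace ℝ (Fin d')), Measurable ξ →
      StronglyMeasurable fun ω => ∫ y, g (ξ ω, y) ∂(K ω) := by
    intro ξ hξ
    exact (hgc.measurable.comp
      ((hξ.comp measurable_fst).prodMk measurable_snd)).stronglyMeasurable.integral_kernel_prod_right'
  have hkb : ∀ (ξ : Ω → EuclideanSpace ℝ (Fin d')) (ω : Ω), |∫ y, g (ξ ω, y) ∂(K ω)| ≤ C :=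
    fun ξ ω => abs_integral_le_of_abs_le (K ω) (fun y => hgC (ξ ω, y))
  -- basic integrabilities
  have hint1 : ∀ n, Integrable (fun ω => g (X n ω, Y n ω)) μ := fun n =>
    integrable_of_abs_le (hgc.measurable.comp ((hX n).prodMk (hY n))).aestronglyMeasurable
      (fun ω => hgC _)
  have hint2 : ∀ n, Integrable (fun ω => g (Xinf ω, Y n ω)) μ := fun n =>
    integrable_of_abs_le (hgc.measurable.comp (hXinf.prodMk (hY n))).aestronglyMeasurable
      (fun ω => hgC _)
  have hint3 : ∀ m n, Integrable (fun ω => g (s m ω, Y n ω)) μ := fun m n =>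
    integrable_of_abs_le (hgc.measurable.comp ((s m).measurable.prodMk (hY n))).aestronglyMeasurable
      (fun ω => hgC _)
  have hdistm : ∀ m, Measurable fun ω => min (2*C) ((L : ℝ) * dist (Xinf ω) (s m ω)) := fun m =>
    measurable_const.min ((hXinf.dist (s m).measurable).const_mul _)
  have hdistb : ∀ m ω, |min (2*C) ((L : ℝ) * dist (Xinf ω) (s m ω))| ≤ 2*C := by
    intro m ω
    rw [abs_le]
    constructor
    · have : (0:ℝ) ≤ min (2*C) ((L:ℝ) * dist (Xinf ω) (s m ω)) :=
        le_min (by positivity) (by positivity)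
      linarith
    · exact min_le_left _ _
  have hinte : ∀ m, Integrable (fun ω => min (2*C) ((L:ℝ) * dist (Xinf ω) (s m ω))) μ := fun m =>
    integrable_of_abs_le (hdistm m).aestronglyMeasurable (hdistb m)
  have hintK : ∀ (ξ : Ω → EuclideanSpace ℝ (Fin d')), Measurable ξ →
      Integrable (fun ω => ∫ y, g (ξ ω, y) ∂(K ω)) μ := fun ξ hξ =>
    integrable_of_abs_le (hkim ξ hξ).aestronglyMeasurable (hkb ξ)
  -- (K1)
  have hK1 : ∀ m n, |J n - Jm m n| ≤ e m := by
    intro m n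
    rw [hJ, hJm, he, ← integral_sub (hint2 n) (hint3 m n)]
    refine le_trans ?_ (integral_mono ((hint2 n).sub (hint3 m n)).abs (hinte m) ?_)
    · simpa [Real.norm_eq_abs] using
        norm_integral_le_integral_norm (μ := μ) (f := fun ω => g (Xinf ω, Y n ω) - g (s m ω, Y n ω))
    · intro ω
      exact lip_fst_bound hg hgC (Xinf ω) (s m ω) (Y n ω)
  -- (K2)
  have hK2 : ∀ m, |T - Tm m| ≤ e m := by
    intro m
    rw [hT, hTm, he, ← integral_sub (hintK Xinf hXinf) (hintK (s m) (s m).measurable)]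
    refine le_trans ?_ (integral_mono
      (((hintK Xinf hXinf).sub (hintK (s m) (s m).measurable)).abs) (hinte m) ?_)
    · simpa [Real.norm_eq_abs] using norm_integral_le_integral_norm (μ := μ)
        (f := fun ω => (∫ y, g (Xinf ω, y) ∂(K ω)) - ∫ y, g (s m ω, y) ∂(K ω))
    · intro ω
      have hi1 : Integrable (fun y => g (Xinf ω, y)) (K ω) :=
        integrable_of_abs_le (hgc.measurable.comp
          (measurable_const.prodMk measurable_id)).aestronglyMeasurable (fun y => hgC _)
      have hi2 : Integrable (fun y => g (s m ω, y)) (K ω) :=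
        integrable_of_abs_le (hgc.measurable.comp
          (measurable_const.prodMk measurable_id)).aestronglyMeasurable (fun y => hgC _)
      calc |(∫ y, g (Xinf ω, y) ∂(K ω)) - ∫ y, g (s m ω, y) ∂(K ω)|
          = |∫ y, (g (Xinf ω, y) - g (s m ω, y)) ∂(K ω)| := by rw [integral_sub hi1 hi2]
        _ ≤ min (2*C) ((L:ℝ) * dist (Xinf ω) (s m ω)) :=
            abs_integral_le_of_abs_le (K ω) (fun y => lip_fst_bound hg hgC _ _ y)
  -- (K3)
  have hK3 : Tendsto e atTop (𝓝 0) := by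
    have := tendsto_integral_of_dominated_convergence (μ := μ)
      (F := fun m ω => min (2*C) ((L:ℝ) * dist (Xinf ω) (s m ω))) (f := fun _ => (0:ℝ))
      (fun _ => 2*C) (fun m => (hdistm m).aestronglyMeasurable) (integrable_const _)
      (fun m => ae_of_all _ fun ω => by simpa [Real.norm_eq_abs] using hdistb m ω)
      (ae_of_all _ fun ω => ?_)
    · simpa using this
    · have h1 : Tendsto (fun m => dist (Xinf ω) (s m ω)) atTop (𝓝 0) := by
        have := Filter.Tendsto.dist
          (tendsto_const_nhds : Tendsto (fun _ : ℕ => Xinf ω) atTop (𝓝 (Xinf ω))) (hsT ω)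
        simpa using this
      have h2 : Tendsto (fun m => (L:ℝ) * dist (Xinf ω) (s m ω)) atTop (𝓝 0) := by
        simpa using h1.const_mul (L:ℝ)
      have h3 := (tendsto_const_nhds (x := (2*C:ℝ)) (f := atTop (α := ℕ))).min h2
      simpa [min_eq_right hC0, min_eq_right, (by positivity : (0:ℝ) ≤ 2*C)] using h3
  -- (K4)
  have hK4 : ∀ m, Tendsto (fun n => Jm m n) atTop (𝓝 (Tm m)) := by
    intro m
    have hres : ∀ x : EuclideanSpace ℝ (Fin d'),
        μ.restrict (s m ⁻¹' {x}) = P.restrict (A ∩ (B ∩ s m ⁻¹' {x})) := by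
      intro x
      rw [hμ, Measure.restrict_restrict ((s m).measurableSet_fiber x)]
      congr 1
      ext ω
      simp only [Set.mem_inter_iff, Set.mem_preimage]
      tauto
    have hrw1 : ∀ n, Jm m n = ∑ x ∈ (s m).range, ∫ ω in A ∩ (B ∩ s m ⁻¹' {x}), g (x, Y n ω) ∂P := by
      intro n
      simp only [hJm]
      rw [fiber_sum μ (s m) (fun x ω => g (x, Y n ω)) (fun x =>
        integrable_of_abs_le (hgc.measurable.comp
          (measurable_const.prodMk (hY n))).aestronglyMeasurable (fun ω => hgC _))]
      exact Finset.sum_congr rfl fun x _ => by rw [← hres x]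
    have hrw2 : Tm m = ∑ x ∈ (s m).range,
        ∫ ω in A ∩ (B ∩ s m ⁻¹' {x}), (∫ y, g (x, y) ∂(K ω)) ∂P := by
      simp only [hTm]
      rw [fiber_sum μ (s m) (fun x ω => ∫ y, g (x, y) ∂(K ω)) (fun x =>
        hintK (fun _ => x) measurable_const)]
      exact Finset.sum_congr rfl fun x _ => by rw [← hres x]
    rw [hrw2]
    have hsum := tendsto_finset_sum (s m).range
      (f := fun (x : EuclideanSpace ℝ (Fin d')) n => ∫ ω in A ∩ (B ∩ s m ⁻¹' {x}), g (x, Y n ω) ∂P)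
      (a := fun (x : EuclideanSpace ℝ (Fin d')) =>
        ∫ ω in A ∩ (B ∩ s m ⁻¹' {x}), (∫ y, g (x, y) ∂(K ω)) ∂P)
      (fun x _ => h (B ∩ s m ⁻¹' {x}) (hB.inter ((s m).measurableSet_fiber x)) (fun y => g (x, y))
        (hgc.comp (Continuous.prodMk_right x)) ⟨C, fun y => hgC _⟩)
    exact hsum.congr (fun n => (hrw1 n).symm)
  -- (K5) quantitative bound
  have hK5 : ∀ ε' : ℝ, 0 < ε' → ∀ n, |I n - J n| ≤
      (L:ℝ) * ε' + 2*C * (P ({ω | ε' < dist (X n ω) (Xinf ω)} ∩ A)).toReal := by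
    intro ε' hε' n
    set D := {ω | ε' < dist (X n ω) (Xinf ω)} with hD
    have hDm : MeasurableSet D := measurableSet_lt measurable_const ((hX n).dist hXinf)
    have hpt : ∀ ω, |g (X n ω, Y n ω) - g (Xinf ω, Y n ω)| ≤
        (L:ℝ) * ε' + Set.indicator D (fun _ => 2*C) ω := by
      intro ω
      have hb := lip_fst_bound hg hgC (X n ω) (Xinf ω) (Y n ω)
      by_cases hω : ω ∈ D
      · rw [Set.indicator_of_mem hω]
        have h1 : |g (X n ω, Y n ω) - g (Xinf ω, Y n ω)| ≤ 2*C := hb.trans (min_le_left _ _)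
        have h2 : (0:ℝ) ≤ (L:ℝ) * ε' := by positivity
        linarith
      · rw [Set.indicator_of_notMem hω]
        have h1 : dist (X n ω) (Xinf ω) ≤ ε' := not_lt.mp hω
        have h2 : |g (X n ω, Y n ω) - g (Xinf ω, Y n ω)| ≤ (L:ℝ) * dist (X n ω) (Xinf ω) :=
          hb.trans (min_le_right _ _)
        have h3 : (L:ℝ) * dist (X n ω) (Xinf ω) ≤ (L:ℝ) * ε' :=
          mul_le_mul_of_nonneg_left h1 (by positivity)
        linarith
    have hIntInd : Integrable (fun ω => (L:ℝ) * ε' + Set.indicator D (fun _ => 2*C) ω) μ :=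
      (integrable_const _).add ((integrable_const _).indicator hDm)
    have step1 : |I n - J n| ≤ ∫ ω, ((L:ℝ) * ε' + Set.indicator D (fun _ => 2*C) ω) ∂μ := by
      rw [hI, hJ, ← integral_sub (hint1 n) (hint2 n)]
      refine le_trans ?_ (integral_mono ((hint1 n).sub (hint2 n)).abs hIntInd hpt)
      simpa [Real.norm_eq_abs] using norm_integral_le_integral_norm (μ := μ)
        (f := fun ω => g (X n ω, Y n ω) - g (Xinf ω, Y n ω))
    have step2 : ∫ ω, ((L:ℝ) * ε' + Set.indicator D (fun _ => 2*C) ω) ∂μ =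
        (L:ℝ) * ε' * (μ Set.univ).toReal + 2*C * (μ D).toReal := by
      rw [integral_add (integrable_const _) ((integrable_const _).indicator hDm),
        integral_const, integral_indicator hDm, setIntegral_const]
      simp [mul_comm, Measure.restrict_apply]; rfl
    have hμuniv : (μ Set.univ).toReal ≤ 1 := by
      rw [hμ, Measure.restrict_apply_univ]
      calc (P (A ∩ B)).toReal ≤ (P Set.univ).toReal :=
        ENNReal.toReal_mono (measure_ne_top _ _) (measure_mono (Set.subset_univ _))
      _ = 1 := by simp
    have hμD : (μ D).toReal ≤ (P (D ∩ A)).toReal := by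
      rw [hμ, Measure.restrict_apply hDm]
      exact ENNReal.toReal_mono (measure_ne_top _ _)
        (measure_mono (Set.inter_subset_inter_right D Set.inter_subset_left))
    have h1 : (L:ℝ) * ε' * (μ Set.univ).toReal ≤ (L:ℝ) * ε' := by
      have : (0:ℝ) ≤ (L:ℝ) * ε' := by positivity
      nlinarith [ENNReal.toReal_nonneg (a := μ Set.univ)]
    have h2 : 2*C * (μ D).toReal ≤ 2*C * (P (D ∩ A)).toReal :=
      mul_le_mul_of_nonneg_left hμD (by positivity)
    rw [step2] at step1
    exact step1.trans (by linarith)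
  -- assembly
  rw [Metric.tendsto_atTop]
  intro ε hε
  obtain ⟨m, hm⟩ := (hK3.eventually (gt_mem_nhds (show (0:ℝ) < ε/4 by positivity))).exists
  obtain ⟨N₁, hN₁⟩ := Metric.tendsto_atTop.mp (hK4 m) (ε/4) (by positivity)
  set ε' : ℝ := ε / (8 * ((L:ℝ) + 1)) with hε'def
  have hε' : 0 < ε' := by rw [hε'def]; positivity
  have hLε' : (L:ℝ) * ε' ≤ ε/8 := by
    rw [hε'def, mul_div_assoc']
    rw [div_le_div_iff₀ (by positivity) (by norm_num)]
    nlinarith [hε.le, L.coe_nonneg]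
  have hpen : Tendsto (fun n => 2*C * (P ({ω | ε' < dist (X n ω) (Xinf ω)} ∩ A)).toReal)
      atTop (𝓝 0) := by
    have h0 := hXp ε' hε'
    have h1 : Tendsto (fun n => (P ({ω | ε' < dist (X n ω) (Xinf ω)} ∩ A)).toReal) atTop (𝓝 0) := by
      have := (ENNReal.tendsto_toReal (by simp)).comp h0
      simpa [Function.comp_def] using this
    simpa using h1.const_mul (2*C)
  obtain ⟨N₂, hN₂⟩ := eventually_atTop.mp
    (hpen.eventually (gt_mem_nhds (show (0:ℝ) < ε/8 by positivity)))
  refine ⟨max N₁ N₂, fun n hn => ?_⟩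
  have hn₁ : N₁ ≤ n := le_trans (le_max_left _ _) hn
  have hn₂ : N₂ ≤ n := le_trans (le_max_right _ _) hn
  have e1 : |I n - J n| < ε/4 := by
    have := hK5 ε' hε' n
    have hp := hN₂ n hn₂
    calc |I n - J n| ≤ (L:ℝ) * ε' + 2*C * (P ({ω | ε' < dist (X n ω) (Xinf ω)} ∩ A)).toReal := this
      _ < ε/8 + ε/8 := by exact add_lt_add_of_le_of_lt hLε' hp
      _ = ε/4 := by ring
  have e2 : |J n - Jm m n| < ε/4 := lt_of_le_of_lt (hK1 m n) hm
  have e3 : |Jm m n - Tm m| < ε/4 := by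
    have := hN₁ n hn₁
    rwa [Real.dist_eq] at this
  have e4 : |Tm m - T| < ε/4 := by
    rw [abs_sub_comm]
    exact lt_of_le_of_lt (hK2 m) hm
  rw [Real.dist_eq]
  have t1 : |I n - T| ≤ |I n - J n| + |J n - Jm m n| + |Jm m n - Tm m| + |Tm m - T| := by
    have a1 := abs_sub_le (I n) (J n) T
    have a2 := abs_sub_le (J n) (Jm m n) T
    have a3 := abs_sub_le (Jm m n) (Tm m) T
    linarith
  linarith

/-- If `(X_n)` converges in probability on `A` to `X_∞` and `(Y_n)`
converges stably on `A` to `K`, then `(X_n, Y_n)` converges stably on `A` to the kernel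
`K̄(ω, d(x,y)) = δ_{X_∞(ω)}(dx) ⊗ K(ω, dy)`. -/
theorem stable_convergence_pair {Ω : Type*} [MeasurableSpace Ω]
    (P : Measure Ω) [IsProbabilityMeasure P] {d d' : ℕ}
    (A : Set Ω) (hA : MeasurableSet A)
    (X : ℕ → Ω → EuclideanSpace ℝ (Fin d')) (Xinf : Ω → EuclideanSpace ℝ (Fin d'))
    (hXinf : Measurable Xinf) (hX : ∀ n, Measurable (X n))
    (hXp : ∀ ε > (0 : ℝ),
      Tendsto (fun n => P ({ω | ε < dist (X n ω) (Xinf ω)} ∩ A)) atTop (nhds 0))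
    (Y : ℕ → Ω → EuclideanSpace ℝ (Fin d)) (hY : ∀ n, Measurable (Y n))
    (K : Kernel Ω (EuclideanSpace ℝ (Fin d))) [IsMarkovKernel K]
    (h : StablyConvergesOn P Y A K) :
    StablyConvergesOn P (fun n ω => (X n ω, Y n ω)) A
      ((Kernel.deterministic Xinf hXinf) ×ₖ K) := by
  intro B hB f hf hfb
  obtain ⟨C, hC⟩ := hfb
  have hC0 : 0 ≤ C := le_trans (abs_nonneg _) (hC (0, 0))
  have hfm : Measurable f := hf.measurable
  -- rewrite the limit integral
  have hker : ∀ ω, (∫ z, f z ∂((Kernel.deterministic Xinf hXinf ×ₖ K) ω))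
      = ∫ y, f (Xinf ω, y) ∂(K ω) := by
    intro ω
    rw [Kernel.prod_apply, Kernel.deterministic_apply, Measure.dirac_prod,
      integral_map measurable_prodMk_left.aemeasurable hf.aestronglyMeasurable]
  have hgoal_rw : (∫ ω in A ∩ B, ∫ z, f z ∂((Kernel.deterministic Xinf hXinf ×ₖ K) ω) ∂P)
      = ∫ ω in A ∩ B, ∫ y, f (Xinf ω, y) ∂(K ω) ∂P :=
    integral_congr_ae (ae_of_all _ fun ω => hker ω)
  rw [hgoal_rw]
  set μ := P.restrict (A ∩ B) with hμ
  -- Moreau approximations from below and above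
  obtain ⟨gl, hlLip, hlB, hlle, hlT⟩ := moreau_approx hf hC
  obtain ⟨gu', huLip', huB', hule', huT'⟩ := moreau_approx hf.neg
    (C := C) (fun z => by rw [Pi.neg_apply, abs_neg]; exact hC z)
  set gu : ℕ → _ → ℝ := fun m z => -(gu' m z) with hgu
  have huLip : ∀ m : ℕ, LipschitzWith m (gu m) := by
    intro m
    refine LipschitzWith.of_dist_le_mul fun a b => ?_
    show dist (-(gu' m a)) (-(gu' m b)) ≤ _
    rw [Real.dist_eq, neg_sub_neg, abs_sub_comm, ← Real.dist_eq]
    exact (huLip' m).dist_le_mul a b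
  have huB : ∀ m z, |gu m z| ≤ C := fun m z => by
    show |(-(gu' m z))| ≤ C
    rw [abs_neg]; exact huB' m z
  have hule : ∀ m z, f z ≤ gu m z := fun m z => by
    show f z ≤ -(gu' m z)
    have := hule' m z; rw [Pi.neg_apply] at this; linarith
  have huT : ∀ z, Tendsto (fun m => gu m z) atTop (𝓝 (f z)) := fun z => by
    have := (huT' z).neg
    simpa [hgu] using this
  -- continuity of approximants
  have hlc : ∀ m, Continuous (gl m) := fun m => (hlLip m).continuous
  have huc : ∀ m, Continuous (gu m) := fun m => (huLip m).continuous
  -- lip_case applications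
  have hLl : ∀ m, Tendsto (fun n => ∫ ω in A ∩ B, gl m (X n ω, Y n ω) ∂P) atTop
      (𝓝 (∫ ω in A ∩ B, ∫ y, gl m (Xinf ω, y) ∂(K ω) ∂P)) := fun m =>
    lip_case P A B hA hB X Xinf hXinf hX hXp Y hY K h (gl m) m (hlLip m) C hC0 (hlB m)
  have hLu : ∀ m, Tendsto (fun n => ∫ ω in A ∩ B, gu m (X n ω, Y n ω) ∂P) atTop
      (𝓝 (∫ ω in A ∩ B, ∫ y, gu m (Xinf ω, y) ∂(K ω) ∂P)) := fun m =>
    lip_case P A B hA hB X Xinf hXinf hX hXp Y hY K h (gu m) m (huLip m) C hC0 (huB m)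
  -- kernel integral measurability and boundedness
  have hkim : ∀ (φ : EuclideanSpace ℝ (Fin d') × EuclideanSpace ℝ (Fin d) → ℝ), Measurable φ →
      StronglyMeasurable fun ω => ∫ y, φ (Xinf ω, y) ∂(K ω) := by
    intro φ hφ
    exact (hφ.comp
      ((hXinf.comp measurable_fst).prodMk measurable_snd)).stronglyMeasurable.integral_kernel_prod_right'
  have hkb : ∀ (φ : EuclideanSpace ℝ (Fin d') × EuclideanSpace ℝ (Fin d) → ℝ),
      (∀ z, |φ z| ≤ C) → ∀ ω, |∫ y, φ (Xinf ω, y) ∂(K ω)| ≤ C := fun φ hφ ω =>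
    abs_integral_le_of_abs_le (K ω) (fun y => hφ (Xinf ω, y))
  -- T-limits as m → ∞ (dominated convergence, twice)
  have hTconv : ∀ (G : ℕ → EuclideanSpace ℝ (Fin d') × EuclideanSpace ℝ (Fin d) → ℝ),
      (∀ m, Continuous (G m)) → (∀ m z, |G m z| ≤ C) →
      (∀ z, Tendsto (fun m => G m z) atTop (𝓝 (f z))) →
      Tendsto (fun m => ∫ ω in A ∩ B, ∫ y, G m (Xinf ω, y) ∂(K ω) ∂P) atTop
        (𝓝 (∫ ω in A ∩ B, ∫ y, f (Xinf ω, y) ∂(K ω) ∂P)) := by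
    intro G hGc hGB hGT
    refine tendsto_integral_of_dominated_convergence (fun _ => C)
      (fun m => ((hkim (G m) (hGc m).measurable)).aestronglyMeasurable)
      (integrable_const _)
      (fun m => ae_of_all _ fun ω => by
        simpa [Real.norm_eq_abs] using hkb (G m) (hGB m) ω)
      (ae_of_all _ fun ω => ?_)
    -- inner dominated convergence
    refine tendsto_integral_of_dominated_convergence (fun _ => C)
      (fun m => ((hGc m).measurable.comp
        (measurable_const.prodMk measurable_id)).aestronglyMeasurable)
      (integrable_const _)
      (fun m => ae_of_all _ fun y => by simpa [Real.norm_eq_abs] using hGB m (Xinf ω, y))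
      (ae_of_all _ fun y => hGT (Xinf ω, y))
  have hTl := hTconv gl hlc hlB hlT
  have hTu := hTconv gu huc huB huT
  -- monotonicity of integrals in n
  have hIntf : ∀ n, Integrable (fun ω => f (X n ω, Y n ω)) μ := fun n =>
    integrable_of_abs_le (hfm.comp ((hX n).prodMk (hY n))).aestronglyMeasurable (fun ω => hC _)
  have hIntG : ∀ (G : EuclideanSpace ℝ (Fin d') × EuclideanSpace ℝ (Fin d) → ℝ),
      Continuous G → (∀ z, |G z| ≤ C) → ∀ n, Integrable (fun ω => G (X n ω, Y n ω)) μ :=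
    fun G hGc hGB n => integrable_of_abs_le
      (hGc.measurable.comp ((hX n).prodMk (hY n))).aestronglyMeasurable (fun ω => hGB _)
  have hmono_l : ∀ m n, (∫ ω in A ∩ B, gl m (X n ω, Y n ω) ∂P) ≤
      ∫ ω in A ∩ B, f (X n ω, Y n ω) ∂P := fun m n =>
    integral_mono (hIntG (gl m) (hlc m) (hlB m) n) (hIntf n) (fun ω => hlle m _)
  have hmono_u : ∀ m n, (∫ ω in A ∩ B, f (X n ω, Y n ω) ∂P) ≤
      ∫ ω in A ∩ B, gu m (X n ω, Y n ω) ∂P := fun m n =>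
    integral_mono (hIntf n) (hIntG (gu m) (huc m) (huB m) n) (fun ω => hule m _)
  -- assembly
  set Tf : ℝ := ∫ ω in A ∩ B, ∫ y, f (Xinf ω, y) ∂(K ω) ∂P with hTf
  rw [Metric.tendsto_atTop]
  intro ε hε
  obtain ⟨m₁, hm₁⟩ := (hTl.eventually
    (Metric.ball_mem_nhds Tf (show (0:ℝ) < ε/2 by positivity))).exists
  obtain ⟨m₂, hm₂⟩ := (hTu.eventually
    (Metric.ball_mem_nhds Tf (show (0:ℝ) < ε/2 by positivity))).exists
  rw [Real.dist_eq] at hm₁ hm₂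
  obtain ⟨N₁, hN₁⟩ := Metric.tendsto_atTop.mp (hLl m₁) (ε/2) (by positivity)
  obtain ⟨N₂, hN₂⟩ := Metric.tendsto_atTop.mp (hLu m₂) (ε/2) (by positivity)
  refine ⟨max N₁ N₂, fun n hn => ?_⟩
  have h₁ := hN₁ n (le_trans (le_max_left _ _) hn)
  have h₂ := hN₂ n (le_trans (le_max_right _ _) hn)
  rw [Real.dist_eq] at h₁ h₂ ⊢
  rw [abs_lt]
  have hml := hmono_l m₁ n
  have hmu := hmono_u m₂ n
  have a₁ := abs_lt.mp h₁
  have a₂ := abs_lt.mp h₂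
  have b₁ := abs_lt.mp hm₁
  have b₂ := abs_lt.mp hm₂
  constructor <;> [linarith; linarith]
end
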